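/- Let f : ℂ → ℂ be entire (complex differentiable on all of ℂ) and map real numbers to real numbers. Then (2/π) · ∫_0^{π/2} Re[ f( (cos x) · e^{i x} ) ] dx = Re[ f(1/2) ] (and f(1/2) is real, so the right-hand side equals the real value f(1/2)). -/

import Mathlib

open Real Complex intervalIntegral in
lemma aux_conj_diff (f : ℂ → ℂ) (hf : Differentiable ℂ f) :
    Differentiable ℂ (fun z => (starRingEnd ℂ) (f ((starRingEnd ℂ) z))) := by
  intro z
  set d := deriv f ((starRingEnd ℂ) z) with hd
  have h1 : HasFDerivAt f (ContinuousLinearMap.smulRight (1 : ℂ →L[ℂ] ℂ) d) ((starRingEnd ℂ) z) :=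
    (hf _).hasDerivAt.hasFDerivAt
  have hc : HasFDerivAt (⇑(starRingEnd ℂ)) (Complex.conjCLE : ℂ ≃L[ℝ] ℂ).toContinuousLinearMap z :=
    Complex.conjCLE.hasFDerivAt
  have hc2 : HasFDerivAt (⇑(starRingEnd ℂ)) (Complex.conjCLE : ℂ ≃L[ℝ] ℂ).toContinuousLinearMap
      (f ((starRingEnd ℂ) z)) := Complex.conjCLE.hasFDerivAt
  have h2 := hc2.comp z ((h1.restrictScalars ℝ).comp z hc)
  refine (hasFDerivAt_of_restrictScalars (𝕜 := ℝ)
      (f' := ContinuousLinearMap.smulRight (1 : ℂ →L[ℂ] ℂ) ((starRingEnd ℂ) d)) h2 ?_).differentiableAt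
  ext w
  simp [mul_comm]

open Real Complex in
lemma aux_conj_eq (f : ℂ → ℂ) (hf : Differentiable ℂ f)
    (hreal : ∀ x : ℝ, (f x).im = 0) (z : ℂ) :
    f ((starRingEnd ℂ) z) = (starRingEnd ℂ) (f z) := by
  set F : ℂ → ℂ := fun z => (starRingEnd ℂ) (f ((starRingEnd ℂ) z)) with hF
  have hFd : Differentiable ℂ F := aux_conj_diff f hf
  have hfg : ∃ᶠ w in nhdsWithin (0 : ℂ) {(0:ℂ)}ᶜ, f w = F w := by
    rw [Filter.frequently_iff]
    intro U hU
    rcases Metric.mem_nhdsWithin_iff.mp hU with ⟨ε, hε, hsub⟩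
    refine ⟨((ε / 2 : ℝ) : ℂ), hsub ⟨?_, ?_⟩, ?_⟩
    · simp only [Metric.mem_ball, dist_zero_right, Complex.norm_real, Real.norm_eq_abs]
      rw [abs_of_pos (by linarith)]; linarith
    · simp only [Set.mem_compl_iff, Set.mem_singleton_iff, Complex.ofReal_eq_zero]
      intro h; linarith [h]
    · have h1 : (starRingEnd ℂ) ((ε / 2 : ℝ) : ℂ) = ((ε / 2 : ℝ) : ℂ) := Complex.conj_ofReal _
      have h2 : (starRingEnd ℂ) (f ((ε / 2 : ℝ) : ℂ)) = f ((ε / 2 : ℝ) : ℂ) :=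
        Complex.conj_eq_iff_im.mpr (hreal _)
      rw [hF]; simp only []; rw [h1, h2]
  have heq : f = F :=
    AnalyticOnNhd.eq_of_frequently_eq (Complex.analyticOnNhd_univ_iff_differentiable.mpr hf)
      (Complex.analyticOnNhd_univ_iff_differentiable.mpr hFd) hfg
  have := congrFun heq ((starRingEnd ℂ) z)
  rw [this]
  simp [hF]

open Real Complex in
lemma aux_mean (f : ℂ → ℂ) (hf : Differentiable ℂ f) :
    (f (1/2)).re = (2*π)⁻¹ * ∫ θ in (0:ℝ)..(2*π), (f (circleMap (1/2) (1/2) θ)).re := by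
  have hw : (1/2 : ℂ) ∈ Metric.ball (1/2 : ℂ) (1/2) := Metric.mem_ball_self (by norm_num)
  have h := (hf.diffContOnCl).two_pi_i_inv_smul_circleIntegral_sub_inv_smul hw
  have hcont : Continuous fun θ : ℝ => f (circleMap (1/2) (1/2) θ) :=
    hf.continuous.comp (continuous_circleMap _ _)
  have hInt : IntervalIntegrable (fun θ : ℝ => f (circleMap (1/2) (1/2) θ))
      MeasureTheory.volume 0 (2*π) := hcont.intervalIntegrable _ _
  have hne : ∀ θ : ℝ, circleMap 0 (1/2) θ ≠ 0 := fun θ =>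
    circleMap_ne_center (by norm_num)
  have hcalc : (∮ z in C((1/2 : ℂ), (1/2 : ℝ)), (z - 1/2)⁻¹ • f z)
      = Complex.I * ∫ θ in (0:ℝ)..(2*π), f (circleMap (1/2) (1/2) θ) := by
    rw [circleIntegral, ← intervalIntegral.integral_const_mul]
    refine intervalIntegral.integral_congr fun θ _ => ?_
    rw [deriv_circleMap, circleMap_sub_center, smul_eq_mul, smul_eq_mul]
    field_simp [hne θ]
  rw [hcalc] at h
  have hI : (2 * (π : ℂ) * Complex.I)⁻¹ • (Complex.I *
      ∫ θ in (0:ℝ)..(2*π), f (circleMap (1/2) (1/2) θ))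
      = ((2*π)⁻¹ : ℝ) * ∫ θ in (0:ℝ)..(2*π), f (circleMap (1/2) (1/2) θ) := by
    rw [smul_eq_mul, ← mul_assoc]
    congr 1
    have : ((2*π)⁻¹ : ℝ) = (((2*π : ℝ)) : ℂ)⁻¹ := by push_cast; ring
    field_simp [Complex.I_ne_zero, Real.pi_ne_zero]
    have hπc : (π:ℂ) ≠ 0 := Complex.ofReal_ne_zero.mpr Real.pi_ne_zero
    push_cast
    field_simp
  rw [hI] at h
  rw [← h, Complex.re_ofReal_mul]
  congr 1
  exact (Complex.reCLM.intervalIntegral_comp_comm hInt).symm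

open Real in
theorem statement_9 (f : ℂ → ℂ) (hf : Differentiable ℂ f)
    (hreal : ∀ x : ℝ, (f x).im = 0) :
    (2 / π) * ∫ x in (0 : ℝ)..(π / 2),
        (f ((Real.cos x : ℂ) * Complex.exp (Complex.I * x))).re =
      (f (1 / 2)).re := by
  have hconj : ∀ z, f ((starRingEnd ℂ) z) = (starRingEnd ℂ) (f z) := aux_conj_eq f hf hreal
  set g : ℝ → ℝ := fun θ => (f (circleMap (1/2) (1/2) θ)).re with hg
  have hgc : Continuous g :=
    Complex.continuous_re.comp (hf.continuous.comp (continuous_circleMap _ _))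
  have hsymm : ∀ θ : ℝ, g (-θ) = g θ := by
    intro θ
    have hmap : circleMap (1/2) (1/2) (-θ) = (starRingEnd ℂ) (circleMap (1/2) (1/2) θ) := by
      simp only [circleMap, map_add, map_mul, map_inv₀, map_ofNat, Complex.conj_ofReal,
        Complex.conj_I, ← Complex.exp_conj, map_one, map_div₀]
      push_cast
      ring_nf
    rw [hg]; simp only []
    rw [hmap, hconj, Complex.conj_re]
  have hper : Function.Periodic g (2*π) := fun θ => by
    rw [hg]; simp only []; rw [periodic_circleMap _ _ θ]
  have hshift := hper.intervalIntegral_add_eq (-π) 0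
  rw [show -π + 2*π = π by ring, zero_add] at hshift
  have hneg : ∫ θ in (-π:ℝ)..0, g θ = ∫ θ in (0:ℝ)..π, g θ := by
    have h := intervalIntegral.integral_comp_neg (a := (0:ℝ)) (b := π) (f := g)
    simp only [hsymm, neg_zero] at h
    exact h.symm
  have hadd : ∫ θ in (-π:ℝ)..π, g θ = (∫ θ in (-π:ℝ)..0, g θ) + ∫ θ in (0:ℝ)..π, g θ :=
    (intervalIntegral.integral_add_adjacent_intervals
      (hgc.intervalIntegrable _ _) (hgc.intervalIntegrable _ _)).symm
  have h2 : ∫ θ in (0:ℝ)..(2*π), g θ = 2 * ∫ θ in (0:ℝ)..π, g θ := by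
    rw [← hshift, hadd, hneg]; ring
  have hkey : ∀ x : ℝ, ((Real.cos x : ℂ) * Complex.exp (Complex.I * x))
      = circleMap (1/2) (1/2) (2*x) := by
    intro x
    rw [Complex.ofReal_cos, Complex.cos, circleMap]
    rw [div_mul_eq_mul_div, add_mul, ← Complex.exp_add, ← Complex.exp_add]
    push_cast
    ring_nf
    rw [Complex.exp_zero]
    ring
  have hint : (∫ x in (0:ℝ)..(π/2),
      (f ((Real.cos x : ℂ) * Complex.exp (Complex.I * x))).re) = ∫ x in (0:ℝ)..(π/2), g (2*x) := by
    refine intervalIntegral.integral_congr fun x _ => ?_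
    rw [hg]; simp only []; rw [hkey x]
  have hsub : (2:ℝ) • ∫ x in (0:ℝ)..(π/2), g (2*x) = ∫ x in (0:ℝ)..π, g x := by
    have := intervalIntegral.smul_integral_comp_mul_left (a := (0:ℝ)) (b := π/2) (f := g) 2
    rw [this, show (2:ℝ)*(π/2) = π by ring, show (2:ℝ)*0 = 0 by ring]
  have hmean := aux_mean f hf
  rw [hint]
  rw [← hg] at hmean
  rw [h2] at hmean
  rw [smul_eq_mul] at hsub
  rw [hmean, ← hsub]
  have hπ : (π:ℝ) ≠ 0 := Real.pi_ne_zero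
  field_simp
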